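/- Let Γ be a group satisfying the Følner condition and a ∈ ℂ[Γ] an element which is not a right zero-divisor in ℂ[Γ] (i.e., ba = 0 implies b = 0). Then the right-multiplication operator ρ(a) on ℓ²(Γ) has trivial kernel. -/

import Mathlib

noncomputable section

open scoped ComplexConjugate ENNReal

variable {Γ : Type*} [Group Γ]

local notation "H" => lp (fun _ : Γ => ℂ) 2

private lemma memtwo (g : Γ) (ξ : H) : Memℓp (fun x : Γ => (ξ : ∀ _ : Γ, ℂ) (g⁻¹ * x)) 2 := by
  have h2 : (0:ℝ) < (2 : ℝ≥0∞).toReal := by norm_num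
  rw [memℓp_gen_iff h2]
  have := (memℓp_gen_iff h2).1 (lp.memℓp ξ)
  exact ((Equiv.mulLeft g⁻¹).summable_iff
    (f := fun x => ‖(ξ : ∀ _ : Γ, ℂ) x‖ ^ (2:ℝ≥0∞).toReal)).2 this

/-- Left translation as a linear isometry equivalence of `ℓ²(Γ)`. -/
def lpT (g : Γ) : H ≃ₗᵢ[ℂ] H where
  toFun ξ := ⟨fun x => ξ (g⁻¹ * x), memtwo g ξ⟩
  invFun ξ := ⟨fun x => ξ (g * x), by have := memtwo g⁻¹ ξ; simp only [inv_inv] at this; exact this⟩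
  map_add' ξ η := rfl
  map_smul' c ξ := rfl
  left_inv ξ := by apply Subtype.ext; funext x; simp
  right_inv ξ := by apply Subtype.ext; funext x; simp
  norm_map' ξ := by
    have h2 : (0:ℝ) < (2 : ℝ≥0∞).toReal := by norm_num
    rw [lp.norm_eq_tsum_rpow h2, lp.norm_eq_tsum_rpow h2]
    congr 1
    exact (Equiv.mulLeft g⁻¹).tsum_eq (fun x => ‖(ξ : ∀ _ : Γ, ℂ) x‖ ^ (2:ℝ≥0∞).toReal)

@[simp] lemma lpT_apply (g : Γ) (ξ : H) (x : Γ) :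
    ((lpT g ξ : H) : ∀ _ : Γ, ℂ) x = (ξ : ∀ _ : Γ, ℂ) (g⁻¹ * x) := rfl

lemma lpT_symm (g : Γ) : (lpT g).symm = lpT (g⁻¹ : Γ) := by
  ext ξ x
  show (ξ : ∀ _ : Γ, ℂ) (g * x) = (ξ : ∀ _ : Γ, ℂ) (g⁻¹⁻¹ * x)
  rw [inv_inv]

lemma lpT_comp (g h : Γ) (ξ : H) : lpT g (lpT h ξ) = lpT (g * h) ξ := by
  apply Subtype.ext; funext x
  show (ξ : ∀ _ : Γ, ℂ) (h⁻¹ * (g⁻¹ * x)) = (ξ : ∀ _ : Γ, ℂ) ((g*h)⁻¹ * x)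
  rw [mul_inv_rev, mul_assoc]

lemma lpT_single [DecidableEq Γ] (g x : Γ) :
    lpT g (lp.single 2 x (1:ℂ)) = lp.single 2 (g * x) (1:ℂ) := by
  apply Subtype.ext; funext y
  show (lp.single 2 x (1:ℂ) : ∀ _ : Γ, ℂ) (g⁻¹ * y) = (lp.single 2 (g*x) (1:ℂ) : ∀ _ : Γ, ℂ) y
  rw [lp.single_apply, lp.single_apply]
  by_cases h : y = g * x
  · subst h; rw [Pi.single_apply, Pi.single_apply, if_pos (by group), if_pos rfl]
  · rw [Pi.single_apply, Pi.single_apply, if_neg (fun hc => h (by rw [← hc]; group)), if_neg h]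

lemma mul_apply_right' [DecidableEq Γ] (f a : MonoidAlgebra ℂ Γ) (x : Γ) :
    (f * a).coeff x = ∑ h ∈ a.coeff.support, f.coeff (x * h⁻¹) * a.coeff h := by
  rw [MonoidAlgebra.coeff_mul]
  unfold Finsupp.sum
  rw [Finset.sum_comm]
  refine Finset.sum_congr rfl fun h hh => ?_
  have : ∀ a₁ ∈ f.coeff.support, (if a₁ * h = x then f.coeff a₁ * a.coeff h else 0)
      = if a₁ = x * h⁻¹ then f.coeff a₁ * a.coeff h else 0 := by
    intro a₁ _
    congr 1
    apply propext
    constructor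
    · intro e; rw [← e]; group
    · intro e; rw [e]; group
  rw [Finset.sum_congr rfl this, Finset.sum_ite_eq' f.coeff.support (x * h⁻¹)]
  split_ifs with hs
  · rfl
  · rw [Finsupp.notMem_support_iff.1 hs, zero_mul]

end

/-- Følner's condition for a discrete group `Γ`: for every finite `S ⊆ Γ` and `ε > 0`
there is a finite nonempty `F ⊆ Γ` with `|{g ∈ F : Sg ⊄ F}| < ε |F|`. -/
def GroupFolner (Γ : Type*) [Group Γ] [DecidableEq Γ] : Prop :=
  ∀ S : Finset Γ, ∀ ε : ℝ, 0 < ε → ∃ F : Finset Γ, F.Nonempty ∧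
    ((F.filter (fun g => ¬ S.image (· * g) ⊆ F)).card : ℝ) < ε * (F.card : ℝ)

open scoped ENNReal ComplexConjugate

set_option maxHeartbeats 2000000
set_option synthInstance.maxHeartbeats 1000000

/-- Elek's theorem (group case of Theorem zd-thm): if `Γ` is amenable and
`a ∈ ℂ[Γ]` is not a right zero-divisor, then the right convolution operator
`ρ(a) : ℓ²(Γ) → ℓ²(Γ)`, `(ρ(a)ξ)(x) = ∑_h a(h) ξ(x h⁻¹)`, has trivial kernel. -/
theorem right_convolution_injective_of_not_right_zero_divisor
    {Γ : Type*} [Group Γ] [Countable Γ] [DecidableEq Γ]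
    (hFol : GroupFolner Γ)
    (a : MonoidAlgebra ℂ Γ)
    (ha : ∀ b : MonoidAlgebra ℂ Γ, b * a = 0 → b = 0)
    (ξ : lp (fun _ : Γ => ℂ) 2)
    (hξ : ∀ x : Γ, ∑ h ∈ a.coeff.support, a.coeff h * (ξ : ∀ _ : Γ, ℂ) (x * h⁻¹) = 0) :
    ξ = 0 := by
  classical
  by_contra hne
  haveI : Fact ((1:ℝ≥0∞) ≤ 2) := ⟨one_le_two⟩
  set Y : Submodule ℂ (lp (fun _ : Γ => ℂ) 2) := Submodule.span ℂ (Set.range fun g : Γ => lpT g ξ) with hY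
  set Yb := Y.topologicalClosure with hYb
  haveI : CompleteSpace Yb := @IsClosed.completeSpace_coe _ _ _ _ Y.isClosed_topologicalClosure
  set P := Submodule.orthogonalProjectionOnto Yb with hP
  set dl : Γ → lp (fun _ : Γ => ℂ) 2 := fun x => lp.single 2 x (1:ℂ) with hdl
  set δ : ℝ := ‖(P (dl 1) : lp (fun _ : Γ => ℂ) 2)‖^2 with hδ
  -- translation invariance of Y and its closure
  have hYT : ∀ g : Γ, ∀ η ∈ Y, lpT g η ∈ Y := by
    intro g η hη
    induction hη using Submodule.span_induction with
    | mem v hv =>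
        obtain ⟨k, rfl⟩ := hv
        rw [lpT_comp]
        exact Submodule.subset_span ⟨g * k, rfl⟩
    | zero => simpa using Y.zero_mem
    | add u v _ _ hu hv => rw [map_add]; exact Y.add_mem hu hv
    | smul c u _ hu => rw [map_smul]; exact Y.smul_mem c hu
  have hYbT : ∀ g : Γ, ∀ η ∈ Yb, lpT g η ∈ Yb := by
    intro g η hη
    have hc : η ∈ closure (Y : Set (lp (fun _ : Γ => ℂ) 2)) := by
      rwa [← Y.topologicalClosure_coe]
    have := map_mem_closure (lpT g).continuous hc (fun v hv => hYT g v hv)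
    rwa [← Y.topologicalClosure_coe] at this
  -- commutation of the projection with translations
  have hPcomm : ∀ x : Γ, ((P (dl x) : lp (fun _ : Γ => ℂ) 2)) = lpT x (P (dl 1)) := by
    intro x
    refine Submodule.eq_starProjection_of_mem_of_inner_eq_zero
      (hYbT x _ (P (dl 1)).2) ?_
    intro w hw
    have hdlx : dl x = lpT x (dl 1) := by rw [hdl]; simp [lpT_single]
    have hsub : dl x - lpT x (P (dl 1)) = lpT x ((dl 1) - (P (dl 1) : lp (fun _ : Γ => ℂ) 2)) := by
      rw [map_sub, ← hdlx]
    rw [hsub]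
    have hw' : (lpT x).symm w ∈ Yb := by
      rw [lpT_symm]; exact hYbT x⁻¹ w hw
    calc inner (𝕜 := ℂ) (lpT x ((dl 1) - (P (dl 1) : lp (fun _ : Γ => ℂ) 2))) w
        = inner (𝕜 := ℂ) (lpT x ((dl 1) - (P (dl 1) : lp (fun _ : Γ => ℂ) 2))) (lpT x ((lpT x).symm w)) := by
          rw [(lpT x).apply_symm_apply]
      _ = inner (𝕜 := ℂ) ((dl 1) - (P (dl 1) : lp (fun _ : Γ => ℂ) 2)) ((lpT x).symm w) :=
          (lpT x).inner_map_map _ _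
      _ = 0 := Submodule.starProjection_inner_eq_zero _ _ hw'
  have hδnorm : ∀ x : Γ, ‖(P (dl x) : lp (fun _ : Γ => ℂ) 2)‖^2 = δ := by
    intro x; rw [hPcomm x, (lpT x).norm_map]
  have hone : ((P (dl 1) : lp (fun _ : Γ => ℂ) 2) : ∀ _ : Γ, ℂ) 1 = (δ : ℂ) := by
    have h1 : ((P (dl 1) : lp (fun _ : Γ => ℂ) 2) : ∀ _ : Γ, ℂ) 1 = inner (𝕜 := ℂ) (dl 1) ((P (dl 1) : lp (fun _ : Γ => ℂ) 2)) := by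
      rw [hdl]
      rw [lp.inner_single_left]
      simp
    have h2 : inner (𝕜 := ℂ) (dl 1 - (P (dl 1) : lp (fun _ : Γ => ℂ) 2)) ((P (dl 1) : lp (fun _ : Γ => ℂ) 2)) = 0 :=
      Submodule.starProjection_inner_eq_zero _ _ (P (dl 1)).2
    rw [inner_sub_left, sub_eq_zero] at h2
    rw [h1, h2, inner_self_eq_norm_sq_to_K, hδ]
    norm_num
  have hval : ∀ x : Γ, ((P (dl x) : lp (fun _ : Γ => ℂ) 2) : ∀ _ : Γ, ℂ) x = (δ : ℂ) := by
    intro x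
    rw [hPcomm x]
    have : ((lpT x (P (dl 1)) : lp (fun _ : Γ => ℂ) 2) : ∀ _ : Γ, ℂ) x
        = ((P (dl 1) : lp (fun _ : Γ => ℂ) 2) : ∀ _ : Γ, ℂ) (x⁻¹ * x) := rfl
    rw [this, inv_mul_cancel, hone]
  -- positivity of δ
  have hδpos : 0 < δ := by
    rcases (sq_nonneg ‖(P (dl 1) : lp (fun _ : Γ => ℂ) 2)‖).lt_or_eq with h | h
    · exact h
    · exfalso
      have hz : (P (dl 1) : lp (fun _ : Γ => ℂ) 2) = 0 := by
        have hn : ‖(P (dl 1) : lp (fun _ : Γ => ℂ) 2)‖ = 0 :=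
          (pow_eq_zero_iff (n := 2) (by norm_num)).1 h.symm
        exact norm_eq_zero.1 hn
      have horth : ∀ w ∈ Yb, inner (𝕜 := ℂ) (dl 1) w = 0 := by
        intro w hw
        have h0 : inner (𝕜 := ℂ) (dl 1 - (P (dl 1) : lp (fun _ : Γ => ℂ) 2)) w = 0 :=
          Submodule.starProjection_inner_eq_zero (K := Yb) (dl 1) w hw
        rwa [hz, sub_zero] at h0
      apply hne
      apply Subtype.ext; funext g
      have hmem : lpT g⁻¹ ξ ∈ Yb := Y.le_topologicalClosure (Submodule.subset_span ⟨g⁻¹, rfl⟩)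
      have h1 := horth _ hmem
      rw [hdl, lp.inner_single_left] at h1
      simpa using h1
  -- Følner data
  set K := a.coeff.support with hK
  set ε : ℝ := δ / (2 * ((K.card : ℝ) + 1)) with hε
  have hεpos : 0 < ε := by
    apply div_pos hδpos
    exact mul_pos two_pos (Nat.cast_add_one_pos _)
  set S : Finset Γ := K ∪ K.image (·⁻¹) with hS
  obtain ⟨F, hFne, hFcard⟩ := hFol S ε hεpos
  set Fb := F.filter (fun g => ¬ S.image (· * g) ⊆ F) with hFb
  set F' : Finset Γ := F.image (·⁻¹) with hF'
  have hF'card : F'.card = F.card := Finset.card_image_of_injective _ inv_injective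
  -- the restriction map to `F'` as a map to a Euclidean space
  set R0 : lp (fun _ : Γ => ℂ) 2 →ₗ[ℂ] EuclideanSpace ℂ {x // x ∈ F'} :=
    { toFun := fun f => WithLp.toLp 2 (fun c => (f : ∀ _ : Γ, ℂ) c.val : {x // x ∈ F'} → ℂ)
      map_add' := by intro f g; ext c; simp [lp.coeFn_add]
      map_smul' := by intro r f; ext c; simp [lp.coeFn_smul] } with hR0
  have hR0app : ∀ (f : lp (fun _ : Γ => ℂ) 2) (c : {x // x ∈ F'}),
      R0 f c = (f : ∀ _ : Γ, ℂ) c.val := fun f c => rfl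
  have hR0norm : ∀ f : lp (fun _ : Γ => ℂ) 2, ‖R0 f‖ ≤ ‖f‖ := by
    intro f
    have h2 : (0:ℝ) < (2 : ℝ≥0∞).toReal := by norm_num
    have hrp := lp.sum_rpow_le_norm_rpow h2 f F'
    have e1 : ∀ y : ℝ, y ^ (2:ℝ≥0∞).toReal = y ^ 2 := by
      intro y
      rw [show ((2:ℝ≥0∞).toReal) = ((2:ℕ):ℝ) by norm_num, Real.rpow_natCast]
    simp only [e1] at hrp
    have hsum : ∑ c : {x // x ∈ F'}, ‖(f : ∀ _ : Γ, ℂ) c.val‖ ^ 2 ≤ ‖f‖ ^ 2 := by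
      rw [Finset.sum_coe_sort_eq_attach]
      rw [Finset.sum_attach F' (fun x => ‖(f : ∀ _ : Γ, ℂ) x‖ ^ 2)]
      exact hrp
    rw [EuclideanSpace.norm_eq]
    have : ∑ c : {x // x ∈ F'}, ‖R0 f c‖ ^ 2 ≤ ‖f‖ ^ 2 := hsum
    calc Real.sqrt (∑ c : {x // x ∈ F'}, ‖R0 f c‖ ^ 2) ≤ Real.sqrt (‖f‖ ^ 2) :=
          Real.sqrt_le_sqrt this
      _ = ‖f‖ := Real.sqrt_sq (norm_nonneg f)
  set R : lp (fun _ : Γ => ℂ) 2 →L[ℂ] EuclideanSpace ℂ {x // x ∈ F'} :=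
    R0.mkContinuous 1 (fun f => by rw [one_mul]; exact hR0norm f) with hR
  set M : Submodule ℂ (EuclideanSpace ℂ {x // x ∈ F'}) := Y.map R0 with hM
  have hRYb : ∀ η, η ∈ Yb → R0 η ∈ M := by
    intro η hη
    have hc : η ∈ closure (Y : Set (lp (fun _ : Γ => ℂ) 2)) := by
      rwa [← Y.topologicalClosure_coe]
    have hmt : Set.MapsTo R (Y : Set (lp (fun _ : Γ => ℂ) 2))
        (M : Set (EuclideanSpace ℂ {x // x ∈ F'})) := fun v hv => ⟨v, hv, rfl⟩
    have hmem := map_mem_closure R.continuous hc hmt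
    rwa [M.closed_of_finiteDimensional.closure_eq] at hmem
  -- the lower bound
  set d := Module.finrank ℂ ↥M with hd
  have hlow : δ * (F'.card : ℝ) ≤ (d : ℝ) := by
    set b := stdOrthonormalBasis ℂ ↥M with hb
    have key : ∀ c : {x // x ∈ F'},
        δ ≤ ∑ i : Fin d, ‖((b i : ↥M) : EuclideanSpace ℂ {x // x ∈ F'}) c‖ ^ 2 := by
      intro c
      set u : ↥M := ⟨R0 ((P (dl c.val) : lp (fun _ : Γ => ℂ) 2)),
        hRYb _ (P (dl c.val)).2⟩ with hu
      have huval : ((u : EuclideanSpace ℂ {x // x ∈ F'})) c = (δ : ℂ) := hval c.val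
      have hrepr : ((u : EuclideanSpace ℂ {x // x ∈ F'}))
          = ∑ i, b.repr u i • ((b i : ↥M) : EuclideanSpace ℂ {x // x ∈ F'}) := by
        have h := congrArg (fun v : ↥M => (v : EuclideanSpace ℂ {x // x ∈ F'})) (b.sum_repr u)
        simpa using h.symm
      have hev : (δ : ℂ) = ∑ i, b.repr u i
          * ((b i : ↥M) : EuclideanSpace ℂ {x // x ∈ F'}) c := by
        rw [← huval, hrepr]
        have := Finset.sum_apply c Finset.univ
          (fun i => b.repr u i • ((b i : ↥M) : {x // x ∈ F'} → ℂ))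
        rw [WithLp.ofLp_sum, Finset.sum_apply]; rfl
      have hCS : δ ^ 2 ≤ (∑ i : Fin d, ‖b.repr u i‖ ^ 2)
          * (∑ i : Fin d, ‖((b i : ↥M) : EuclideanSpace ℂ {x // x ∈ F'}) c‖ ^ 2) := by
        have h1 : δ ≤ ∑ i : Fin d, ‖b.repr u i‖
            * ‖((b i : ↥M) : EuclideanSpace ℂ {x // x ∈ F'}) c‖ := by
          calc δ = ‖(δ : ℂ)‖ := by
                rw [Complex.norm_real, Real.norm_eq_abs, abs_of_nonneg hδpos.le]
            _ ≤ ∑ i : Fin d, ‖b.repr u i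
                * ((b i : ↥M) : EuclideanSpace ℂ {x // x ∈ F'}) c‖ := by
                rw [hev]; exact norm_sum_le _ _
            _ = ∑ i : Fin d, ‖b.repr u i‖
                * ‖((b i : ↥M) : EuclideanSpace ℂ {x // x ∈ F'}) c‖ := by
                simp [norm_mul]
        have h2 := Finset.sum_mul_sq_le_sq_mul_sq Finset.univ
          (fun i : Fin d => ‖b.repr u i‖)
          (fun i : Fin d => ‖((b i : ↥M) : EuclideanSpace ℂ {x // x ∈ F'}) c‖)
        calc δ ^ 2 ≤ (∑ i : Fin d, ‖b.repr u i‖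
              * ‖((b i : ↥M) : EuclideanSpace ℂ {x // x ∈ F'}) c‖) ^ 2 := by
              have hnn : (0:ℝ) ≤ ∑ i : Fin d, ‖b.repr u i‖
                  * ‖((b i : ↥M) : EuclideanSpace ℂ {x // x ∈ F'}) c‖ :=
                Finset.sum_nonneg fun i _ => by positivity
              exact pow_le_pow_left₀ hδpos.le h1 2
          _ ≤ _ := h2
      have hru : ∑ i : Fin d, ‖b.repr u i‖ ^ 2 ≤ δ := by
        have e1 : ∑ i : Fin d, ‖b.repr u i‖ ^ 2 = ‖b.repr u‖ ^ 2 := by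
          rw [EuclideanSpace.norm_eq, Real.sq_sqrt]
          exact Finset.sum_nonneg fun i _ => sq_nonneg _
        rw [e1, b.repr.norm_map u]
        have : ‖u‖ = ‖R0 ((P (dl c.val) : lp (fun _ : Γ => ℂ) 2))‖ := rfl
        rw [this]
        calc ‖R0 ((P (dl c.val) : lp (fun _ : Γ => ℂ) 2))‖ ^ 2
            ≤ ‖(P (dl c.val) : lp (fun _ : Γ => ℂ) 2)‖ ^ 2 := by
              have := hR0norm ((P (dl c.val) : lp (fun _ : Γ => ℂ) 2))
              exact pow_le_pow_left₀ (norm_nonneg _) this 2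
          _ = δ := hδnorm c.val
      nlinarith [Finset.sum_nonneg
        (fun (i : Fin d) (_ : i ∈ Finset.univ) => sq_nonneg
          ‖((b i : ↥M) : EuclideanSpace ℂ {x // x ∈ F'}) c‖)]
    have hsum := Finset.sum_le_sum (fun c (_ : c ∈ Finset.univ) => key c)
    rw [Finset.sum_const, Finset.card_univ, Fintype.card_coe] at hsum
    have hrhs : ∑ c : {x // x ∈ F'}, ∑ i : Fin d,
        ‖((b i : ↥M) : EuclideanSpace ℂ {x // x ∈ F'}) c‖ ^ 2 = (d : ℝ) := by
      rw [Finset.sum_comm]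
      have e2 : ∀ i : Fin d, ∑ c : {x // x ∈ F'},
          ‖((b i : ↥M) : EuclideanSpace ℂ {x // x ∈ F'}) c‖ ^ 2 = 1 := by
        intro i
        have := EuclideanSpace.norm_eq ((b i : ↥M) : EuclideanSpace ℂ {x // x ∈ F'})
        have hn : ‖((b i : ↥M) : EuclideanSpace ℂ {x // x ∈ F'})‖ = 1 := by
          have := b.orthonormal.1 i
          exact this
        have h3 : Real.sqrt (∑ c : {x // x ∈ F'},
            ‖((b i : ↥M) : EuclideanSpace ℂ {x // x ∈ F'}) c‖ ^ 2) = 1 := by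
          rw [← this, hn]
        have h4 := congrArg (fun t : ℝ => t ^ 2) h3
        simpa [Real.sq_sqrt (Finset.sum_nonneg fun c _ => sq_nonneg _)] using h4
      rw [Finset.sum_congr rfl (fun i (_ : i ∈ Finset.univ) => e2 i)]
      simp
    rw [hrhs, nsmul_eq_mul] at hsum
    rw [mul_comm]
    exact hsum
  -- boundary sets
  set Bad1 := F'.filter (fun x => ¬ ∀ h ∈ K, x * h⁻¹ ∈ F') with hBad1
  set Bad3 := F'.filter (fun y => ¬ ∀ h ∈ K, y * h ∈ F') with hBad3
  set Bad2 := Bad3.biUnion (fun y => K.image (fun h => y * h)) with hBad2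
  set B := Bad1 ∪ Bad2 with hBdef
  -- extension of a function on `F'` to a finitely supported function
  set ext : EuclideanSpace ℂ {x // x ∈ F'} →ₗ[ℂ] MonoidAlgebra ℂ Γ :=
    { toFun := fun v => MonoidAlgebra.ofCoeff (Finsupp.onFinset F'
        (fun y => if h : y ∈ F' then v ⟨y, h⟩ else 0)
        (fun y hy => by by_contra hn; exact hy (by simp [hn])))
      map_add' := by
        intro v w; apply MonoidAlgebra.ext; apply Finsupp.ext; intro y
        rw [MonoidAlgebra.coeff_add, Finsupp.add_apply]
        simp only [MonoidAlgebra.coeff_ofCoeff, Finsupp.onFinset_apply]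
        by_cases h : y ∈ F'
        · rw [dif_pos h, dif_pos h, dif_pos h]; rfl
        · rw [dif_neg h, dif_neg h, dif_neg h, add_zero]
      map_smul' := by
        intro r v; apply MonoidAlgebra.ext; apply Finsupp.ext; intro y
        rw [MonoidAlgebra.coeff_smul, Finsupp.smul_apply]
        simp only [MonoidAlgebra.coeff_ofCoeff, Finsupp.onFinset_apply, RingHom.id_apply]
        by_cases h : y ∈ F'
        · rw [dif_pos h, dif_pos h]; rfl
        · rw [dif_neg h, dif_neg h, smul_zero] } with hext
  have hext_apply : ∀ (v : EuclideanSpace ℂ {x // x ∈ F'}) (y : Γ),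
      (ext v).coeff y = if h : y ∈ F' then v ⟨y, h⟩ else 0 := fun v y => rfl
  -- restrictions of elements of `Y` give, after extension and multiplication by `a`,
  -- functions supported on the boundary `B`
  have hvanish : ∀ η ∈ Y, ∀ x : Γ, x ∉ B → (ext (R0 η) * a).coeff x = 0 := by
    intro η hη
    induction hη using Submodule.span_induction with
    | mem v hv =>
        obtain ⟨g, rfl⟩ := hv
        intro x hx
        rw [mul_apply_right', ← hK]
        by_cases hxF : x ∈ F'
        · have hall : ∀ h ∈ K, x * h⁻¹ ∈ F' := by
            by_contra hnot
            exact hx (Finset.mem_union_left _ (Finset.mem_filter.2 ⟨hxF, hnot⟩))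
          have hterm : ∀ h ∈ K, (ext (R0 (lpT g ξ))).coeff (x * h⁻¹) * a.coeff h
              = a.coeff h * (ξ : ∀ _ : Γ, ℂ) ((g⁻¹ * x) * h⁻¹) := by
            intro h hh
            rw [hext_apply, dif_pos (hall h hh)]
            have hv : (R0 (lpT g ξ)) ⟨x * h⁻¹, hall h hh⟩
                = (ξ : ∀ _ : Γ, ℂ) (g⁻¹ * (x * h⁻¹)) := rfl
            rw [hv, mul_comm, mul_assoc]
          rw [Finset.sum_congr rfl hterm]
          exact hξ (g⁻¹ * x)
        · apply Finset.sum_eq_zero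
          intro h hh
          rw [hext_apply]
          rw [dif_neg ?hn, zero_mul]
          case hn =>
            intro hmem
            by_cases hy : ∀ h' ∈ K, (x * h⁻¹) * h' ∈ F'
            · have := hy h hh
              rw [inv_mul_cancel_right] at this
              exact hxF this
            · exact hx (Finset.mem_union_right _ (Finset.mem_biUnion.2
                ⟨x * h⁻¹, Finset.mem_filter.2 ⟨hmem, hy⟩,
                  Finset.mem_image.2 ⟨h, hh, by group⟩⟩))
    | zero =>
        intro x hx
        rw [map_zero, map_zero, zero_mul]
        rfl
    | add u v hu hv ihu ihv =>
        intro x hx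
        rw [map_add, map_add, add_mul, MonoidAlgebra.coeff_add, Finsupp.add_apply, ihu x hx, ihv x hx, add_zero]
    | smul c u hu ihu =>
        intro x hx
        rw [map_smul, map_smul, smul_mul_assoc, MonoidAlgebra.coeff_smul, Finsupp.smul_apply, ihu x hx, smul_zero]
  -- the evaluation-on-the-boundary map is injective on `M`
  set mulA : MonoidAlgebra ℂ Γ →ₗ[ℂ] MonoidAlgebra ℂ Γ :=
    { toFun := fun b => b * a
      map_add' := fun b c => add_mul b c a
      map_smul' := fun r b => smul_mul_assoc r b a } with hmulA
  set evB : MonoidAlgebra ℂ Γ →ₗ[ℂ] ({x // x ∈ B} → ℂ) :=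
    { toFun := fun b => fun c => b.coeff c.val
      map_add' := fun b c => by funext x; exact Finsupp.add_apply b.coeff c.coeff x.val
      map_smul' := fun r b => by funext x; exact Finsupp.smul_apply (b := r) (v := b.coeff) (a := x.val) } with hevB
  set Φ : ↥M →ₗ[ℂ] ({x // x ∈ B} → ℂ) := evB ∘ₗ mulA ∘ₗ ext ∘ₗ M.subtype with hΦ
  have hΦinj : Function.Injective Φ := by
    refine (injective_iff_map_eq_zero Φ).2 ?_
    intro u hu
    have hzero : ext u.val * a = 0 := by
      apply MonoidAlgebra.ext; apply Finsupp.ext; intro y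
      rw [MonoidAlgebra.coeff_zero, Finsupp.coe_zero, Pi.zero_apply]
      by_cases hyB : y ∈ B
      · have := congrFun hu ⟨y, hyB⟩
        exact this
      · obtain ⟨η, hη, hRη⟩ := u.2
        have := hvanish η hη y hyB
        rwa [hRη] at this
    have h0 : ext u.val = 0 := ha _ hzero
    apply Subtype.ext
    ext c
    have hv : u.val c = (ext u.val).coeff c.val := by
      rw [hext_apply, dif_pos c.2]
    rw [hv, h0]
    rfl
  have hdB : (d : ℝ) ≤ (B.card : ℝ) := by
    have hfin := LinearMap.finrank_le_finrank_of_injective hΦinj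
    rw [Module.finrank_pi ℂ] at hfin
    exact_mod_cast (by simpa [Fintype.card_coe] using hfin : d ≤ B.card)
  -- counting the boundary
  have hB1 : Bad1 ⊆ Fb.image (·⁻¹) := by
    intro x hx
    rw [Finset.mem_filter] at hx
    obtain ⟨hxF', hnot⟩ := hx
    push_neg at hnot
    obtain ⟨h, hhK, hnF⟩ := hnot
    obtain ⟨g, hgF, rfl⟩ := Finset.mem_image.1 hxF'
    refine Finset.mem_image.2 ⟨g, Finset.mem_filter.2 ⟨hgF, ?_⟩, rfl⟩
    intro hsub
    apply hnF
    have hhS : h ∈ S := Finset.mem_union_left _ hhK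
    have hmul : h * g ∈ F := hsub (Finset.mem_image.2 ⟨h, hhS, rfl⟩)
    exact Finset.mem_image.2 ⟨h * g, hmul, by rw [mul_inv_rev]⟩
  have hB3 : Bad3 ⊆ Fb.image (·⁻¹) := by
    intro x hx
    rw [Finset.mem_filter] at hx
    obtain ⟨hxF', hnot⟩ := hx
    push_neg at hnot
    obtain ⟨h, hhK, hnF⟩ := hnot
    obtain ⟨g, hgF, rfl⟩ := Finset.mem_image.1 hxF'
    refine Finset.mem_image.2 ⟨g, Finset.mem_filter.2 ⟨hgF, ?_⟩, rfl⟩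
    intro hsub
    apply hnF
    have hhS : h⁻¹ ∈ S := Finset.mem_union_right _ (Finset.mem_image.2 ⟨h, hhK, rfl⟩)
    have hmul : h⁻¹ * g ∈ F := hsub (Finset.mem_image.2 ⟨h⁻¹, hhS, rfl⟩)
    exact Finset.mem_image.2 ⟨h⁻¹ * g, hmul, by rw [mul_inv_rev, inv_inv]⟩
  have hc1 : Bad1.card ≤ Fb.card := (Finset.card_le_card hB1).trans Finset.card_image_le
  have hc3 : Bad3.card ≤ Fb.card := (Finset.card_le_card hB3).trans Finset.card_image_le
  have hc2 : Bad2.card ≤ Bad3.card * K.card := by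
    refine Finset.card_biUnion_le.trans ?_
    calc ∑ y ∈ Bad3, (K.image (fun h => y * h)).card
        ≤ ∑ y ∈ Bad3, K.card := Finset.sum_le_sum fun y _ => Finset.card_image_le
      _ = Bad3.card * K.card := by rw [Finset.sum_const, smul_eq_mul]
  have hBn : B.card ≤ Fb.card + Fb.card * K.card :=
    (Finset.card_union_le _ _).trans
      (Nat.add_le_add hc1 (hc2.trans (Nat.mul_le_mul hc3 le_rfl)))
  have hchain : (B.card : ℝ) < δ * (F.card : ℝ) / 2 := by
    have h1 : (B.card : ℝ) ≤ (1 + (K.card : ℝ)) * (Fb.card : ℝ) := by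
      have h2 : (B.card : ℝ) ≤ (Fb.card : ℝ) + (Fb.card : ℝ) * (K.card : ℝ) := by
        exact_mod_cast hBn
      calc (B.card : ℝ) ≤ (Fb.card : ℝ) + (Fb.card : ℝ) * (K.card : ℝ) := h2
        _ = (1 + (K.card : ℝ)) * (Fb.card : ℝ) := by ring
    calc (B.card : ℝ) ≤ (1 + (K.card : ℝ)) * (Fb.card : ℝ) := h1
      _ < (1 + (K.card : ℝ)) * (ε * (F.card : ℝ)) := by
          apply mul_lt_mul_of_pos_left hFcard
          exact add_pos_of_pos_of_nonneg one_pos (Nat.cast_nonneg _)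
      _ = δ * (F.card : ℝ) / 2 := by
          rw [hε]
          have hne0 : ((K.card : ℝ) + 1) ≠ 0 := (Nat.cast_add_one_pos _).ne'
          rw [add_comm (1:ℝ), div_mul_eq_mul_div, mul_div_assoc',
            div_eq_div_iff (mul_ne_zero two_ne_zero hne0) two_ne_zero]
          ring
  have hposF : (0:ℝ) < (F.card : ℝ) := by
    exact_mod_cast Finset.card_pos.2 hFne
  rw [hF'card] at hlow
  have := mul_pos hδpos hposF
  linarith [hlow, hdB, hchain]
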